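/- Let M be an n-cluster tilting subcategory of mod-Λ. The functor Θ : F(M) → mod-M̲ sending an epimorphism f : M₁ → M₂ in M to the cokernel of M(-, f) is full, dense and objective; it induces an equivalence F(M)/V′ ≃ mod-M̲, where V′ is generated by objects (M --1--> M) and (M → 0). -/

import Mathlib

open CategoryTheory CategoryTheory.Limits Opposite

noncomputable section

namespace Paper

/-! ### Generalities: objective functors, ideals, quotient categories -/

/-- A functor is *objective* if every morphism killed by it factors through an
object killed by it. -/
def Objective {C D : Type*} [Category C] [Category D] [HasZeroMorphisms D]
    (F : C ⥤ D) : Prop :=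
  ∀ ⦃X Y : C⦄ (f : X ⟶ Y), F.map f = 0 →
    ∃ (K : C) (g : X ⟶ K) (h : K ⟶ Y), g ≫ h = f ∧ IsZero (F.obj K)

/-- A functor is *dense* if it is essentially surjective. -/
def Dense {C D : Type*} [Category C] [Category D] (F : C ⥤ D) : Prop :=
  ∀ Y : D, ∃ X : C, Nonempty (F.obj X ≅ Y)

/-- A morphism factors through an object satisfying `K`. -/
def FactorsThru {C : Type*} [Category C] (K : C → Prop) {X Y : C} (f : X ⟶ Y) : Prop :=
  ∃ (Z : C) (g : X ⟶ Z) (h : Z ⟶ Y), K Z ∧ g ≫ h = f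

/-- The closure of a class of objects under isomorphism, zero objects and finite
biproducts (direct sums). -/
inductive AddClosure {C : Type*} [Category C] [Preadditive C] (K : C → Prop) : C → Prop
  | of {X : C} (h : K X) : AddClosure K X
  | zero {X : C} (h : IsZero X) : AddClosure K X
  | biprod {X Y Z : C} (hX : AddClosure K X) (hY : AddClosure K Y)
      (i₁ : X ⟶ Z) (i₂ : Y ⟶ Z) (p₁ : Z ⟶ X) (p₂ : Z ⟶ Y)
      (h₁ : i₁ ≫ p₁ = 𝟙 X) (h₂ : i₂ ≫ p₂ = 𝟙 Y)
      (h : p₁ ≫ i₁ + p₂ ≫ i₂ = 𝟙 Z) : AddClosure K Z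

/-- The ideal of morphisms factoring through finite direct sums of objects of `K`,
as a `HomRel`. -/
def idealRel {C : Type*} [Category C] [Preadditive C] (K : C → Prop) : HomRel C :=
  fun _ _ f g => FactorsThru (AddClosure K) (f - g)

/-- `F : C ⥤ D` induces an equivalence `C/⟨K⟩ ≃ D`. -/
def InducesEquivalence {C D : Type*} [Category C] [Category D] [Preadditive C]
    (K : C → Prop) (F : C ⥤ D) : Prop :=
  ∃ E : Quotient (idealRel K) ⥤ D, Quotient.functor (idealRel K) ⋙ E = F ∧ E.IsEquivalence

/-- Iterates of an endofunctor. -/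
def iterFun {C : Type*} [Category C] (F : C ⥤ C) : ℕ → (C ⥤ C)
  | 0 => 𝟭 C
  | (k + 1) => iterFun F k ⋙ F

/-- The cokernel functor from the morphism category of an abelian category. -/
def cokerFunctor (C : Type*) [Category C] [Abelian C] : ComposableArrows C 1 ⥤ C where
  obj X := cokernel (X.map' 0 1)
  map {X Y} φ := cokernel.map _ _ (φ.app 0) (φ.app 1) (φ.naturality (homOfLE (by decide)))
  map_id X := by apply coequalizer.hom_ext; simp
  map_comp {X Y Z} φ ψ := by apply coequalizer.hom_ext; simp

/-- An object is a direct summand of another. -/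
def IsSummand {C : Type*} [Category C] (X Y : C) : Prop :=
  ∃ (s : X ⟶ Y) (r : Y ⟶ X), s ≫ r = 𝟙 X

/-! ### The module-theoretic set-up -/

variable (Λ : Type) [Ring Λ]

/-- `π : M ⟶ X` is a right `P`-approximation. -/
def IsRightApprox (P : ModuleCat.{0} Λ → Prop) {M X : ModuleCat.{0} Λ} (π : M ⟶ X) : Prop :=
  P M ∧ ∀ N : ModuleCat.{0} Λ, P N → ∀ g : N ⟶ X, ∃ h : N ⟶ M, h ≫ π = g

/-- `ι : X ⟶ M` is a left `P`-approximation. -/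
def IsLeftApprox (P : ModuleCat.{0} Λ → Prop) {X M : ModuleCat.{0} Λ} (ι : X ⟶ M) : Prop :=
  P M ∧ ∀ N : ModuleCat.{0} Λ, P N → ∀ g : X ⟶ N, ∃ h : M ⟶ N, ι ≫ h = g

/-- Vanishing of `Ext^i(X, Y)`. -/
def extZero (i : ℕ) (X Y : ModuleCat.{0} Λ) : Prop :=
  Subsingleton (((Ext ℤ (ModuleCat.{0} Λ) i).obj (op X)).obj Y)

/-- `P` is an `n`-cluster tilting subcategory of `mod-Λ`. -/
structure IsNClusterTilting (n : ℕ) (P : ModuleCat.{0} Λ → Prop) : Prop where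
  subcat_fg : ∀ X, P X → Module.Finite Λ X
  closed_iso : ∀ {X Y : ModuleCat.{0} Λ}, (X ≅ Y) → P X → P Y
  closed_biprod : ∀ {X Y : ModuleCat.{0} Λ}, P X → P Y → P (X ⊞ Y)
  closed_summand : ∀ {X Y : ModuleCat.{0} Λ} (s : X ⟶ Y) (r : Y ⟶ X),
      s ≫ r = 𝟙 X → P Y → P X
  contra_fin : ∀ X : ModuleCat.{0} Λ, Module.Finite Λ X →
      ∃ (M : ModuleCat.{0} Λ) (π : M ⟶ X), IsRightApprox Λ P π
  cov_fin : ∀ X : ModuleCat.{0} Λ, Module.Finite Λ X →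
      ∃ (M : ModuleCat.{0} Λ) (ι : X ⟶ M), IsLeftApprox Λ P ι
  generating : ∀ X : ModuleCat.{0} Λ, Module.Finite Λ X →
      ∃ (M : ModuleCat.{0} Λ) (π : M ⟶ X), P M ∧ Epi π
  cogenerating : ∀ X : ModuleCat.{0} Λ, Module.Finite Λ X →
      ∃ (M : ModuleCat.{0} Λ) (ι : X ⟶ M), P M ∧ Mono ι
  perp_right : ∀ X : ModuleCat.{0} Λ, Module.Finite Λ X →
      ((∀ M : ModuleCat.{0} Λ, P M → ∀ i, 0 < i → i < n → extZero Λ i M X) ↔ P X)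
  perp_left : ∀ X : ModuleCat.{0} Λ, Module.Finite Λ X →
      ((∀ M : ModuleCat.{0} Λ, P M → ∀ i, 0 < i → i < n → extZero Λ i X M) ↔ P X)

/-- `Λ` is self-injective: finitely generated projective and injective modules coincide. -/
def SelfInjective : Prop :=
  ∀ X : ModuleCat.{0} Λ, Module.Finite Λ X → (Projective X ↔ Injective X)

/-- The subcategory `M` as a category. -/
abbrev MCat (P : ModuleCat.{0} Λ → Prop) := ObjectProperty.FullSubcategory P

/-- Contravariant additive functors on `M`: the ambient category of `mod-M`. -/
abbrev DCat (P : ModuleCat.{0} Λ → Prop) := (MCat Λ P)ᵒᵖ ⥤ AddCommGrpCat.{0}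

/-- Covariant additive functors on `M`. -/
abbrev DCoCat (P : ModuleCat.{0} Λ → Prop) := MCat Λ P ⥤ AddCommGrpCat.{0}

/-- The restricted Yoneda functor `X ↦ Hom_Λ(-, X)|_M`. -/
def W (P : ModuleCat.{0} Λ → Prop) : ModuleCat.{0} Λ ⥤ DCat Λ P :=
  preadditiveYoneda ⋙ (Functor.whiskeringLeft _ _ _).obj (ObjectProperty.ι P).op

/-- The restricted co-Yoneda functor `X ↦ Hom_Λ(X, -)|_M`. -/
def Wco (P : ModuleCat.{0} Λ → Prop) : (ModuleCat.{0} Λ)ᵒᵖ ⥤ DCoCat Λ P :=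
  preadditiveCoyoneda ⋙ (Functor.whiskeringLeft _ _ _).obj (ObjectProperty.ι P)

/-- A finitely presented contravariant functor on `M`. -/
def FinPres (P : ModuleCat.{0} Λ → Prop) (F : DCat Λ P) : Prop :=
  ∃ (A B : MCat Λ P) (f : A ⟶ B), Nonempty (F ≅ cokernel (preadditiveYoneda.map f))

/-- A finitely presented covariant functor on `M`. -/
def CoFinPres (P : ModuleCat.{0} Λ → Prop) (G : DCoCat Λ P) : Prop :=
  ∃ (A B : MCat Λ P) (f : A ⟶ B), Nonempty (G ≅ cokernel (preadditiveCoyoneda.map f.op))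

/-- A contravariant functor vanishing on projectives. -/
def VanishOnProj (P : ModuleCat.{0} Λ → Prop) (F : DCat Λ P) : Prop :=
  ∀ M : MCat Λ P, Projective M.obj → IsZero (F.obj (op M))

/-- A covariant functor vanishing on injectives. -/
def VanishOnInj (P : ModuleCat.{0} Λ → Prop) (G : DCoCat Λ P) : Prop :=
  ∀ M : MCat Λ P, Injective M.obj → IsZero (G.obj M)

/-- The category `mod-M̲` of finitely presented contravariant functors on `M`
vanishing on projectives. -/
abbrev Bar (P : ModuleCat.{0} Λ → Prop) :=
  ObjectProperty.FullSubcategory (fun F : DCat Λ P => FinPres Λ P F ∧ VanishOnProj Λ P F)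

/-- The category `M̄-mod` of finitely presented covariant functors on `M`
vanishing on injectives. -/
abbrev BarCo (P : ModuleCat.{0} Λ → Prop) :=
  ObjectProperty.FullSubcategory (fun G : DCoCat Λ P => CoFinPres Λ P G ∧ VanishOnInj Λ P G)

/-! ### Morphism categories -/

/-- The morphism category `H(Λ)` of `mod-Λ`, modelled by composable arrows. -/
abbrev HCat := ComposableArrows (ModuleCat.{0} Λ) 1

/-- The underlying morphism of an object of the morphism category. -/
def arrowHom (f : HCat Λ) : f.obj' 0 ⟶ f.obj' 1 := f.map' 0 1

/-- Membership in the monomorphism category `S(M)`. -/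
def SPred (P : ModuleCat.{0} Λ → Prop) (f : HCat Λ) : Prop :=
  P (f.obj' 0) ∧ P (f.obj' 1) ∧ Mono (arrowHom Λ f)

/-- The monomorphism category `S(M)`. -/
abbrev SCat (P : ModuleCat.{0} Λ → Prop) := ObjectProperty.FullSubcategory (SPred Λ P)

/-- Membership in the epimorphism category `F(M)`. -/
def FPred (P : ModuleCat.{0} Λ → Prop) (f : HCat Λ) : Prop :=
  P (f.obj' 0) ∧ P (f.obj' 1) ∧ Epi (arrowHom Λ f)

/-- The epimorphism category `F(M)`. -/
abbrev FCat (P : ModuleCat.{0} Λ → Prop) := ObjectProperty.FullSubcategory (FPred Λ P)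

/-- The functor `S(M) → mod-M`-ambient, `f ↦ Coker M(-, f)`. -/
def UpsilonAmb (P : ModuleCat.{0} Λ → Prop) : SCat Λ P ⥤ DCat Λ P :=
  ObjectProperty.ι _ ⋙ (W Λ P).mapComposableArrows 1 ⋙ cokerFunctor (DCat Λ P)

/-- The functor `F(M) → mod-M`-ambient, `f ↦ Coker M(-, f)`. -/
def ThetaAmb (P : ModuleCat.{0} Λ → Prop) : FCat Λ P ⥤ DCat Λ P :=
  ObjectProperty.ι _ ⋙ (W Λ P).mapComposableArrows 1 ⋙ cokerFunctor (DCat Λ P)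

/-- The cokernel functor `S(Λ) → mod-Λ`. -/
def cokAmb : HCat Λ ⥤ ModuleCat.{0} Λ := cokerFunctor (ModuleCat.{0} Λ)

/-- Modules of proper `M`-dimension at most one. -/
def ProperDimLe1 (P : ModuleCat.{0} Λ → Prop) (X : ModuleCat.{0} Λ) : Prop :=
  Module.Finite Λ X ∧ ∃ (M₁ M₀ : ModuleCat.{0} Λ) (f : M₁ ⟶ M₀) (g : M₀ ⟶ X),
    P M₁ ∧ P M₀ ∧ Mono f ∧ Epi g ∧ Function.Exact f g ∧
    (∀ N : ModuleCat.{0} Λ, P N → ∀ u : N ⟶ X, ∃ v : N ⟶ M₀, v ≫ g = u)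

/-- Finitely presented functors on `M` of projective dimension at most one. -/
def PdLe1 (P : ModuleCat.{0} Λ → Prop) (F : DCat Λ P) : Prop :=
  ∃ (A B : MCat Λ P) (f : A ⟶ B), Mono (preadditiveYoneda.map f) ∧
    Nonempty (F ≅ cokernel (preadditiveYoneda.map f))

/-! ### `n`-exact sequences -/

/-- A sequence of `Λ`-modules. -/
structure Seq where
  obj : ℕ → ModuleCat.{0} Λ
  map : ∀ i : ℕ, obj i ⟶ obj (i + 1)

/-- `E` is an `n`-exact sequence `0 → E_0 → E_1 → ⋯ → E_{n+1} → 0` in `M`. -/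
def IsNExact (P : ModuleCat.{0} Λ → Prop) (n : ℕ) (E : Seq Λ) : Prop :=
  (∀ i ≤ n + 1, P (E.obj i)) ∧
  Mono (E.map 0) ∧ Epi (E.map n) ∧
  (∀ i < n, E.map i ≫ E.map (i + 1) = 0) ∧
  (∀ i < n, Function.Exact (E.map i) (E.map (i + 1))) ∧
  (∀ N : ModuleCat.{0} Λ, P N → ∀ i < n, ∀ g : N ⟶ E.obj (i + 1),
      g ≫ E.map (i + 1) = 0 → ∃ h : N ⟶ E.obj i, h ≫ E.map i = g) ∧
  (∀ N : ModuleCat.{0} Λ, P N → ∀ i < n, ∀ g : E.obj (i + 1) ⟶ N,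
      E.map i ≫ g = 0 → ∃ h : E.obj (i + 2) ⟶ N, E.map (i + 1) ≫ h = g)

/-- The sequence `E` begins with the morphism `f`. -/
def Extends (f : HCat Λ) (E : Seq Λ) : Prop :=
  ∃ (h0 : E.obj 0 = f.obj' 0) (h1 : E.obj 1 = f.obj' 1),
    E.map 0 = eqToHom h0 ≫ arrowHom Λ f ≫ eqToHom h1.symm

/-- The sequence `E` ends with the morphism `f`, the last map sitting in
degrees `n`, `n+1`. -/
def CoExtends (n : ℕ) (f : HCat Λ) (E : Seq Λ) : Prop :=
  ∃ (h0 : E.obj n = f.obj' 0) (h1 : E.obj (n + 1) = f.obj' 1),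
    E.map n = eqToHom h0 ≫ arrowHom Λ f ≫ eqToHom h1.symm

/-- An exact sequence `0 → E_0 → ⋯ → E_{n+1} → 0` of `Λ`-modules. -/
def ExactSeqN (n : ℕ) (E : Seq Λ) : Prop :=
  Mono (E.map 0) ∧ Epi (E.map n) ∧
  (∀ i < n, E.map i ≫ E.map (i + 1) = 0 ∧ Function.Exact (E.map i) (E.map (i + 1)))

/-- `P` is closed under `n`-th syzygies (the `nℤ`-condition). -/
def NZClosed (P : ModuleCat.{0} Λ → Prop) (n : ℕ) : Prop :=
  ∀ M : ModuleCat.{0} Λ, P M → ∃ E : Seq Λ, ExactSeqN Λ n E ∧ E.obj (n + 1) = M ∧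
    P (E.obj 0) ∧ ∀ i, 1 ≤ i → i ≤ n → Projective (E.obj i) ∧ Module.Finite Λ (E.obj i)

/-! ### Stable Hom-groups and Ext functors -/

/-- Morphisms factoring through a projective module. -/
def projFactorSub (X Y : ModuleCat.{0} Λ) : AddSubgroup (X ⟶ Y) where
  carrier := {f | ∃ (Q : ModuleCat.{0} Λ) (_ : Projective Q) (a : X ⟶ Q) (b : Q ⟶ Y), a ≫ b = f}
  zero_mem' := ⟨Projective.over Y, inferInstance, 0, Projective.π Y, by simp⟩
  add_mem' := by
    rintro f g ⟨Q, hQ, a, b, rfl⟩ ⟨Q', hQ', a', b', rfl⟩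
    exact ⟨Q ⊞ Q', by infer_instance, biprod.lift a a', biprod.desc b b', by simp⟩
  neg_mem' := by
    rintro f ⟨Q, hQ, a, b, rfl⟩
    exact ⟨Q, hQ, a, -b, by simp⟩

/-- Morphisms factoring through an injective module. -/
def injFactorSub (X Y : ModuleCat.{0} Λ) : AddSubgroup (X ⟶ Y) where
  carrier := {f | ∃ (Q : ModuleCat.{0} Λ) (_ : Injective Q) (a : X ⟶ Q) (b : Q ⟶ Y), a ≫ b = f}
  zero_mem' := ⟨Injective.under X, inferInstance, Injective.ι X, 0, by simp⟩
  add_mem' := by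
    rintro f g ⟨Q, hQ, a, b, rfl⟩ ⟨Q', hQ', a', b', rfl⟩
    exact ⟨Q ⊞ Q', by infer_instance, biprod.lift a a', biprod.desc b b', by simp⟩
  neg_mem' := by
    rintro f ⟨Q, hQ, a, b, rfl⟩
    exact ⟨Q, hQ, a, -b, by simp⟩

/-- The stable Hom group `Hom̲(X, Y)`. -/
abbrev stHom (X Y : ModuleCat.{0} Λ) := (X ⟶ Y) ⧸ projFactorSub Λ X Y

/-- The costable Hom group `Hom̄(X, Y)`. -/
abbrev costHom (X Y : ModuleCat.{0} Λ) := (X ⟶ Y) ⧸ injFactorSub Λ X Y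

/-- Precomposition as an additive map. -/
def precompHom {X' X Y : ModuleCat.{0} Λ} (f : X' ⟶ X) : (X ⟶ Y) →+ (X' ⟶ Y) :=
  AddMonoidHom.mk' (fun g => f ≫ g) (fun a b => by simp)

/-- The stable Hom functor `M̲(-, X)` on `M`. -/
def stHomFunctor (P : ModuleCat.{0} Λ → Prop) (X : ModuleCat.{0} Λ) :
    (MCat Λ P)ᵒᵖ ⥤ AddCommGrpCat.{0} where
  obj N := AddCommGrpCat.of (stHom Λ N.unop.obj X)
  map {N N'} f :=
    AddCommGrpCat.ofHom (QuotientAddGroup.map _ _ (precompHom Λ f.unop.hom) (by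
      rintro g ⟨Q, hQ, a, b, rfl⟩
      exact ⟨Q, hQ, f.unop.hom ≫ a, b, by simp [precompHom]⟩))
  map_id N := by
    ext x
    (try simp [precompHom]) <;> rfl
  map_comp {N N' N''} f g := by
    ext x
    (try simp [precompHom]) <;> rfl

/-- Postcomposition as an additive map. -/
def postcompHom {X Y Y' : ModuleCat.{0} Λ} (f : Y ⟶ Y') : (X ⟶ Y) →+ (X ⟶ Y') :=
  AddMonoidHom.mk' (fun g => g ≫ f) (fun a b => by simp)

/-- The costable Hom functor `M̄(X, -)` on `M`. -/
def costHomFunctor (P : ModuleCat.{0} Λ → Prop) (X : ModuleCat.{0} Λ) :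
    MCat Λ P ⥤ AddCommGrpCat.{0} where
  obj N := AddCommGrpCat.of (costHom Λ X N.obj)
  map {N N'} f :=
    AddCommGrpCat.ofHom (QuotientAddGroup.map _ _ (postcompHom Λ f.hom) (by
      rintro g ⟨Q, hQ, a, b, rfl⟩
      exact ⟨Q, hQ, a, b ≫ f.hom, by simp [postcompHom]⟩))
  map_id N := by
    ext x
    (try simp [postcompHom]) <;> rfl
  map_comp {N N' N''} f g := by
    ext x
    (try simp [postcompHom]) <;> rfl

/-- The restricted covariant Ext functor `Ext^k(X, -)|_M`. -/
def extCov (P : ModuleCat.{0} Λ → Prop) (k : ℕ) (X : ModuleCat.{0} Λ) :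
    MCat Λ P ⥤ AddCommGrpCat.{0} :=
  ObjectProperty.ι P ⋙ (Ext ℤ (ModuleCat.{0} Λ) k).obj (op X) ⋙
    forget₂ (ModuleCat ℤ) AddCommGrpCat

/-- The restricted contravariant Ext functor `Ext^k(-, X)|_M`. -/
def extContra (P : ModuleCat.{0} Λ → Prop) (k : ℕ) (X : ModuleCat.{0} Λ) :
    (MCat Λ P)ᵒᵖ ⥤ AddCommGrpCat.{0} :=
  (ObjectProperty.ι P).op ⋙ (Ext ℤ (ModuleCat.{0} Λ) k).flip.obj X ⋙
    forget₂ (ModuleCat ℤ) AddCommGrpCat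


/-- Relative projectivity with respect to the proper `M`-exact structure `F_M`. -/
def RelProjective (P : ModuleCat.{0} Λ → Prop) (X : ModuleCat.{0} Λ) : Prop :=
  ∀ (A B : ModuleCat.{0} Λ), Module.Finite Λ A → Module.Finite Λ B → ∀ g : A ⟶ B, Epi g →
    (∀ N : ModuleCat.{0} Λ, P N → ∀ u : N ⟶ B, ∃ v : N ⟶ A, v ≫ g = u) →
    ∀ u : X ⟶ B, ∃ v : X ⟶ A, v ≫ g = u

end Paper

namespace Paper

/-- An indecomposable module. -/
def Indecomp {A : Type} [Ring A] (N : ModuleCat.{0} A) : Prop :=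
  ¬ IsZero N ∧ ∀ (X Y : ModuleCat.{0} A), Nonempty (N ≅ X ⊞ Y) → IsZero X ∨ IsZero Y

/-- A ring is of finite representation type. -/
def FinRepType (A : Type) [Ring A] : Prop :=
  ∃ (m : ℕ) (I : Fin m → ModuleCat.{0} A), ∀ N : ModuleCat.{0} A,
    Module.Finite A N → Indecomp N → ∃ i, Nonempty (N ≅ I i)

end Paper

namespace Paper

open ZeroObject

section Helpers

variable {Λ : Type} [Ring Λ] {P : ModuleCat.{0} Λ → Prop}

lemma subsingleton_of_isZero_mod {M : ModuleCat.{0} ℤ} (h : IsZero M) : Subsingleton M := by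
  have hid : 𝟙 M = 0 := h.eq_of_src _ _
  refine ⟨fun x y => ?_⟩
  calc x = (𝟙 M : M ⟶ M) x := rfl
  _ = (0 : M ⟶ M) x := by rw [hid]
  _ = (0 : M ⟶ M) y := rfl
  _ = (𝟙 M : M ⟶ M) y := by rw [hid]
  _ = y := rfl

lemma eq_zero_of_isZero_ab {A : AddCommGrpCat.{0}} (h : IsZero A) (x : A) : x = 0 := by
  have hid : 𝟙 A = 0 := h.eq_of_src _ _
  calc x = (𝟙 A : A ⟶ A) x := rfl
  _ = (0 : A ⟶ A) x := by rw [hid]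
  _ = 0 := rfl

lemma P_zero {nn : ℕ} (hP : IsNClusterTilting Λ nn P) : P 0 := by
  obtain ⟨M, π, hM, _⟩ := hP.generating (ModuleCat.of Λ PUnit) inferInstance
  exact hP.closed_summand (0 : (0 : ModuleCat.{0} Λ) ⟶ M) 0
    ((isZero_zero _).eq_of_src _ _) hM

lemma P_projective {nn : ℕ} (hP : IsNClusterTilting Λ nn P) (X : ModuleCat.{0} Λ)
    (hfin : Module.Finite Λ X) (hX : Projective X) : P X := by
  refine (hP.perp_left X hfin).mp ?_
  intro M hM i hi hin
  obtain ⟨k, rfl⟩ : ∃ k, i = k + 1 := ⟨i - 1, (Nat.succ_pred_eq_of_pos hi).symm⟩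
  exact subsingleton_of_isZero_mod (isZero_Ext_succ_of_projective X M k)

/-- Pointwise surjectivity of the cokernel projection in a functor category. -/
lemma coker_pi_app_surjective {F G : DCat Λ P} (η : F ⟶ G) (N : (MCat Λ P)ᵒᵖ) :
    Function.Surjective ((cokernel.π η).app N) := by
  let Ev := (evaluation (MCat Λ P)ᵒᵖ AddCommGrpCat.{0}).obj N
  have h1 : (cokernel.π η).app N = Ev.map (cokernel.π η) := rfl
  rw [h1, ← π_comp_cokernelComparison]
  have : Epi (cokernel.π (Ev.map η) ≫ cokernelComparison η Ev) := epi_comp _ _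
  exact (AddCommGrpCat.epi_iff_surjective _).mp this

/-- Pointwise exactness of the cokernel sequence in a functor category. -/
lemma coker_exact {F G : DCat Λ P} (η : F ⟶ G) (N : (MCat Λ P)ᵒᵖ) (y : G.obj N)
    (hy : (cokernel.π η).app N y = 0) : ∃ x : F.obj N, η.app N x = y := by
  let Ev := (evaluation (MCat Λ P)ᵒᵖ AddCommGrpCat.{0}).obj N
  have h1 : (cokernel.π η).app N = cokernel.π (η.app N) ≫ cokernelComparison η Ev :=
    (π_comp_cokernelComparison η Ev).symm
  rw [h1] at hy
  have h2 : cokernel.π (η.app N) y = 0 := by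
    have hmono : Function.Injective (cokernelComparison η Ev) :=
      (AddCommGrpCat.mono_iff_injective _).mp inferInstance
    apply hmono
    simpa using hy
  exact (ShortComplex.ab_exact_iff _).mp (ShortComplex.exact_cokernel (η.app N)) y h2

end Helpers

end Paper


namespace Paper

section Theta

variable {Λ : Type} [Ring Λ] {P : ModuleCat.{0} Λ → Prop}

lemma dcat_hom_ext {F G : DCat Λ P} {μ ν : F ⟶ G}
    (h : ∀ (N : (MCat Λ P)ᵒᵖ) (x : F.obj N), μ.app N x = ν.app N x) : μ = ν := by
  apply NatTrans.ext; funext N; ext x; exact h N x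

lemma nat_app_elt {F G : DCat Λ P} (μ : F ⟶ G) {N N' : (MCat Λ P)ᵒᵖ} (h : N ⟶ N')
    (x : F.obj N) : μ.app N' (F.map h x) = G.map h (μ.app N x) :=
  ConcreteCategory.congr_hom (μ.naturality h) x

/-- The arrow underlying an object of `F(M)`. -/
abbrev far (f : FCat Λ P) : f.obj.obj' 0 ⟶ f.obj.obj' 1 := f.obj.map' 0 1

/-- The two components of a morphism in `F(M)`. -/
abbrev app0 {f g : FCat Λ P} (φ : f ⟶ g) : f.obj.obj' 0 ⟶ g.obj.obj' 0 :=
  ComposableArrows.app' (F := f.obj) (G := g.obj) φ.hom 0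

abbrev app1 {f g : FCat Λ P} (φ : f ⟶ g) : f.obj.obj' 1 ⟶ g.obj.obj' 1 :=
  ComposableArrows.app' (F := f.obj) (G := g.obj) φ.hom 1

lemma theta_obj (f : FCat Λ P) :
    (ThetaAmb Λ P).obj f = cokernel ((W Λ P).map (far f)) := rfl

lemma theta_pi {f g : FCat Λ P} (φ : f ⟶ g) :
    cokernel.π ((W Λ P).map (far f)) ≫ (ThetaAmb Λ P).map φ
      = (W Λ P).map (app1 φ) ≫ cokernel.π ((W Λ P).map (far g)) :=
  cokernel.π_desc _ _ _

lemma exists_lift {f g : FCat Λ P} (χ : (ThetaAmb Λ P).obj f ⟶ (ThetaAmb Λ P).obj g) :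
    ∃ φ : f ⟶ g, (ThetaAmb Λ P).map φ = χ := by
  let M2 : MCat Λ P := ⟨f.obj.obj' 1, f.property.2.1⟩
  let M1 : MCat Λ P := ⟨f.obj.obj' 0, f.property.1⟩
  let x : (cokernel ((W Λ P).map (far f))).obj (op M2) :=
    (cokernel.π ((W Λ P).map (far f))).app (op M2) (𝟙 (f.obj.obj' 1))
  obtain ⟨a, ha⟩ := coker_pi_app_surjective ((W Λ P).map (far g)) (op M2) (χ.app (op M2) x)
  have key : cokernel.π ((W Λ P).map (far f)) ≫ χ
      = (W Λ P).map (a : f.obj.obj' 1 ⟶ g.obj.obj' 1)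
          ≫ cokernel.π ((W Λ P).map (far g)) := by
    apply dcat_hom_ext
    intro N t
    let t' : N.unop ⟶ M2 := ObjectProperty.homMk t
    have hτ : ∀ (F : DCat Λ P) (μ : (W Λ P).obj (f.obj.obj' 1) ⟶ F),
        μ.app N t = F.map t'.op (μ.app (op M2) (𝟙 (f.obj.obj' 1))) := by
      intro F μ
      have h2 : ((W Λ P).obj (f.obj.obj' 1)).map t'.op (𝟙 (f.obj.obj' 1)) = t := by
        show (t : N.unop.obj ⟶ f.obj.obj' 1) ≫ 𝟙 _ = t
        exact Category.comp_id _
      rw [← h2]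
      exact nat_app_elt μ _ _
    calc (cokernel.π ((W Λ P).map (far f)) ≫ χ).app N t
        = χ.app N ((cokernel.π ((W Λ P).map (far f))).app N t) := rfl
      _ = χ.app N ((cokernel ((W Λ P).map (far f))).map t'.op x) := by
            rw [hτ _ (cokernel.π ((W Λ P).map (far f)))]
      _ = ((ThetaAmb Λ P).obj g).map t'.op (χ.app (op M2) x) := nat_app_elt χ _ _
      _ = ((ThetaAmb Λ P).obj g).map t'.op
            ((cokernel.π ((W Λ P).map (far g))).app (op M2) a) := by rw [ha]
      _ = NatTrans.app (G := (ThetaAmb Λ P).obj g) (cokernel.π ((W Λ P).map (far g))) N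
            (((W Λ P).obj (g.obj.obj' 1)).map t'.op a) := by exact (nat_app_elt _ _ _).symm
      _ = NatTrans.app (G := (ThetaAmb Λ P).obj g) ((W Λ P).map (a : f.obj.obj' 1 ⟶ g.obj.obj' 1)
            ≫ cokernel.π ((W Λ P).map (far g))) N t := rfl
  have h0 : (cokernel.π ((W Λ P).map (far f))).app (op M1) (far f) = 0 := by
    have e : (cokernel.π ((W Λ P).map (far f))).app (op M1) (far f)
        = ((W Λ P).map (far f) ≫ cokernel.π ((W Λ P).map (far f))).app (op M1)
            (𝟙 (f.obj.obj' 0)) := by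
      show _ = (cokernel.π ((W Λ P).map (far f))).app (op M1) (𝟙 _ ≫ far f)
      rw [Category.id_comp]
    rw [e, cokernel.condition]
    rfl
  have h1 : (cokernel.π ((W Λ P).map (far g))).app (op M1) (far f ≫ a) = 0 := by
    have e : (cokernel.π ((W Λ P).map (far g))).app (op M1) (far f ≫ a)
        = ((W Λ P).map (a : f.obj.obj' 1 ⟶ g.obj.obj' 1)
            ≫ cokernel.π ((W Λ P).map (far g))).app (op M1) (far f) := rfl
    rw [e, ← key]
    show χ.app (op M1) ((cokernel.π ((W Λ P).map (far f))).app (op M1) (far f)) = 0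
    rw [h0]
    exact map_zero _
  obtain ⟨b, hb⟩ := coker_exact ((W Λ P).map (far g)) (op M1) (far f ≫ a) h1
  have hb' : (b : f.obj.obj' 0 ⟶ g.obj.obj' 0) ≫ far g = far f ≫ a := hb
  refine ⟨ObjectProperty.homMk (ComposableArrows.homMk₁ b a hb'.symm), ?_⟩
  apply coequalizer.hom_ext
  show cokernel.π ((W Λ P).map (far f)) ≫ (ThetaAmb Λ P).map _
      = cokernel.π ((W Λ P).map (far f)) ≫ χ
  rw [theta_pi, key]
  rfl

end Theta

end Paper


namespace Paper

section Theta2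

variable {Λ : Type} [Ring Λ] {P : ModuleCat.{0} Λ → Prop}

lemma W_map_add {X Y : ModuleCat.{0} Λ} (m m' : X ⟶ Y) :
    (W Λ P).map (m + m') = (W Λ P).map m + (W Λ P).map m' := by
  apply dcat_hom_ext; intro N t
  show (t : N.unop.obj ⟶ X) ≫ (m + m') = (((W Λ P).map m) + ((W Λ P).map m')).app N t
  exact Preadditive.comp_add _ _ _ _ _ _

instance thetaAmb_additive : Functor.Additive (ThetaAmb Λ P) where
  map_add := by
    intro f g u v
    apply coequalizer.hom_ext
    show cokernel.π ((W Λ P).map (far f)) ≫ (ThetaAmb Λ P).map (u + v)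
        = cokernel.π ((W Λ P).map (far f)) ≫ ((ThetaAmb Λ P).map u + (ThetaAmb Λ P).map v)
    erw [theta_pi, Preadditive.comp_add, theta_pi, theta_pi, ← Preadditive.add_comp,
      ← W_map_add]
    rfl

lemma epi_W_of_lift {Z₁ Z₂ : ModuleCat.{0} Λ} (m : Z₁ ⟶ Z₂)
    (hl : ∀ (N : MCat Λ P), ∀ u : N.obj ⟶ Z₂, ∃ v : N.obj ⟶ Z₁, v ≫ m = u) :
    Epi ((W Λ P).map m) := by
  rw [NatTrans.epi_iff_epi_app]
  intro N
  rw [AddCommGrpCat.epi_iff_surjective]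
  intro u
  obtain ⟨v, hv⟩ := hl N.unop u
  exact ⟨v, hv⟩

lemma isZero_coker_of_epi {F G : DCat Λ P} (η : F ⟶ G) [Epi η] : IsZero (cokernel η) :=
  (isZero_zero _).of_iso (cokernel.ofEpi η)

lemma isZero_bar {F : Bar Λ P} (h : IsZero F.obj) : IsZero F := by
  rw [IsZero.iff_id_eq_zero] at h ⊢
  exact InducedCategory.hom_ext h

/-- The restricted Yoneda functor agrees with the Yoneda functor of `M` on `M`. -/
def yonIso (A : MCat Λ P) : (W Λ P).obj A.obj ≅ preadditiveYoneda.obj A :=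
  NatIso.ofComponents (fun N => AddEquiv.toAddCommGrpIso
    { toFun := fun t => ObjectProperty.homMk t, invFun := fun t => t.hom,
      left_inv := fun _ => rfl, right_inv := fun _ => rfl, map_add' := fun _ _ => rfl })
    (fun _ => by ext; rfl)

/-- Cokernels of the two Yoneda images agree. -/
def cokIso {A B : MCat Λ P} (f : A ⟶ B) :
    cokernel ((W Λ P).map f.hom) ≅ cokernel (preadditiveYoneda.map f) :=
  cokernel.mapIso _ _ (yonIso A) (yonIso B) (dcat_hom_ext (fun _ _ => rfl))

lemma theta_mem (f : FCat Λ P) :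
    FinPres Λ P ((ThetaAmb Λ P).obj f) ∧ VanishOnProj Λ P ((ThetaAmb Λ P).obj f) := by
  constructor
  · refine ⟨⟨f.obj.obj' 0, f.property.1⟩, ⟨f.obj.obj' 1, f.property.2.1⟩,
      (ObjectProperty.homMk (far f) : (⟨f.obj.obj' 0, f.property.1⟩ : MCat Λ P) ⟶ ⟨f.obj.obj' 1, f.property.2.1⟩), ⟨?_⟩⟩
    show cokernel ((W Λ P).map (far f)) ≅ _
    exact cokIso (Λ := Λ) (P := P) (ObjectProperty.homMk (far f) :
      (⟨f.obj.obj' 0, f.property.1⟩ : MCat Λ P) ⟶ ⟨f.obj.obj' 1, f.property.2.1⟩)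
  · intro Q hQ
    haveI : Epi (far f) := f.property.2.2
    haveI : Projective Q.obj := hQ
    have hfac : ∀ u : Q.obj ⟶ f.obj.obj' 1, ∃ v : Q.obj ⟶ f.obj.obj' 0, v ≫ far f = u :=
      fun u => Projective.factors u (far f)
    have hepi : Epi (((W Λ P).map (far f)).app (op Q)) := by
      rw [AddCommGrpCat.epi_iff_surjective]
      intro u
      obtain ⟨v, hv⟩ := hfac u
      exact ⟨v, hv⟩
    let Ev := (evaluation (MCat Λ P)ᵒᵖ AddCommGrpCat.{0}).obj (op Q)
    haveI : Epi (Ev.map ((W Λ P).map (far f))) := hepi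
    exact IsZero.of_iso (isZero_zero _)
      (PreservesCokernel.iso Ev ((W Λ P).map (far f)) ≪≫ cokernel.ofEpi _)

end Theta2

/-- The functor `Θ : F(M) → mod-M̲`. -/
def Theta (Λ : Type) [Ring Λ] (P : ModuleCat.{0} Λ → Prop) : FCat Λ P ⥤ Bar Λ P :=
  ObjectProperty.lift _ (ThetaAmb Λ P) theta_mem

section Theta3

open ZeroObject

variable {Λ : Type} [Ring Λ] {P : ModuleCat.{0} Λ → Prop}

lemma factor_thru {nn : ℕ} (hP : IsNClusterTilting Λ nn P) {f g : FCat Λ P} (φ : f ⟶ g)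
    (h : f.obj.obj' 1 ⟶ g.obj.obj' 0) (hh : app1 φ = h ≫ far g) :
    ∃ (K : FCat Λ P) (α : f ⟶ K) (β : K ⟶ g), α ≫ β = φ ∧
      AddClosure (fun k : FCat Λ P => IsIso (arrowHom Λ k.obj) ∨ IsZero (k.obj.obj' 1)) K ∧
      IsZero ((ThetaAmb Λ P).obj K) := by
  have hcomm : far f ≫ app1 φ = app0 φ ≫ far g :=
    φ.hom.naturality (homOfLE (show (0 : Fin 2) ≤ 1 by decide))
  have hkey : (app0 φ - far f ≫ h) ≫ far g = 0 := by
    rw [Preadditive.sub_comp, Category.assoc, ← hh, hcomm, sub_self]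
  have hepi : Epi (arrowHom Λ (ComposableArrows.mk₁
      (biprod.snd : f.obj.obj' 0 ⊞ g.obj.obj' 0 ⟶ g.obj.obj' 0))) := by
    show Epi (biprod.snd : f.obj.obj' 0 ⊞ g.obj.obj' 0 ⟶ g.obj.obj' 0); infer_instance
  refine ⟨⟨ComposableArrows.mk₁ (biprod.snd : f.obj.obj' 0 ⊞ g.obj.obj' 0 ⟶ g.obj.obj' 0),
      hP.closed_biprod f.property.1 g.property.1, g.property.1, hepi⟩,
    ObjectProperty.homMk (ComposableArrows.homMk₁ (biprod.lift (𝟙 (f.obj.obj' 0)) (far f ≫ h)) h (by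
      show far f ≫ h = biprod.lift (𝟙 _) (far f ≫ h) ≫ biprod.snd; rw [biprod.lift_snd])),
    ObjectProperty.homMk (ComposableArrows.homMk₁
      (biprod.desc (app0 φ - far f ≫ h) (𝟙 (g.obj.obj' 0))) (far g) (by
        show (biprod.snd : f.obj.obj' 0 ⊞ g.obj.obj' 0 ⟶ g.obj.obj' 0) ≫ far g
            = biprod.desc (app0 φ - far f ≫ h) (𝟙 (g.obj.obj' 0)) ≫ far g
        apply biprod.hom_ext'
        · rw [biprod.inl_snd_assoc, biprod.inl_desc_assoc, hkey, zero_comp]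
        · rw [biprod.inr_snd_assoc, biprod.inr_desc_assoc, Category.id_comp])),
    ?_, ?_, ?_⟩
  · apply InducedCategory.hom_ext
    apply ComposableArrows.hom_ext₁
    · have hx : biprod.lift (𝟙 (f.obj.obj' 0)) (far f ≫ h)
          ≫ biprod.desc (app0 φ - far f ≫ h) (𝟙 (g.obj.obj' 0))
          = app0 φ := by
        rw [biprod.lift_desc, Category.id_comp, Category.comp_id, sub_add_cancel]
      exact hx
    · exact hh.symm
  · -- AddClosure
    have hA : FPred Λ P (ComposableArrows.mk₁ (𝟙 (g.obj.obj' 0))) :=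
      ⟨g.property.1, g.property.1, by show Epi (𝟙 (g.obj.obj' 0)); infer_instance⟩
    have hB : FPred Λ P (ComposableArrows.mk₁ (0 : f.obj.obj' 0 ⟶ (0 : ModuleCat.{0} Λ))) :=
      ⟨f.property.1, P_zero hP, ⟨fun {Z} u v _ => (isZero_zero _).eq_of_src u v⟩⟩
    refine AddClosure.biprod (X := (⟨ComposableArrows.mk₁ (𝟙 (g.obj.obj' 0)), hA⟩ : FCat Λ P))
      (Y := (⟨ComposableArrows.mk₁ (0 : f.obj.obj' 0 ⟶ (0 : ModuleCat.{0} Λ)), hB⟩ : FCat Λ P))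
      (Z := (⟨ComposableArrows.mk₁ (biprod.snd : f.obj.obj' 0 ⊞ g.obj.obj' 0 ⟶ g.obj.obj' 0),
        hP.closed_biprod f.property.1 g.property.1, g.property.1, hepi⟩ : FCat Λ P))
      (AddClosure.of (Or.inl (by show IsIso (𝟙 (g.obj.obj' 0)); infer_instance)))
      (AddClosure.of (Or.inr (show IsZero (0 : ModuleCat.{0} Λ) from isZero_zero _)))
      (ObjectProperty.homMk (ComposableArrows.homMk₁ biprod.inr (𝟙 (g.obj.obj' 0)) (by
        show 𝟙 (g.obj.obj' 0) ≫ 𝟙 (g.obj.obj' 0) = biprod.inr ≫ (biprod.snd : f.obj.obj' 0 ⊞ g.obj.obj' 0 ⟶ g.obj.obj' 0)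
        simp)))
      (ObjectProperty.homMk (ComposableArrows.homMk₁ biprod.inl (0 : (0 : ModuleCat.{0} Λ) ⟶ g.obj.obj' 0) (by
        show (0 : f.obj.obj' 0 ⟶ (0 : ModuleCat.{0} Λ)) ≫ (0 : (0 : ModuleCat.{0} Λ) ⟶ g.obj.obj' 0)
          = biprod.inl ≫ (biprod.snd : f.obj.obj' 0 ⊞ g.obj.obj' 0 ⟶ g.obj.obj' 0)
        simp)))
      (ObjectProperty.homMk (ComposableArrows.homMk₁ biprod.snd (𝟙 (g.obj.obj' 0)) (by rfl)))
      (ObjectProperty.homMk (ComposableArrows.homMk₁ biprod.fst (0 : g.obj.obj' 0 ⟶ (0 : ModuleCat.{0} Λ)) (by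
        show (biprod.snd : f.obj.obj' 0 ⊞ g.obj.obj' 0 ⟶ g.obj.obj' 0) ≫ (0 : g.obj.obj' 0 ⟶ (0 : ModuleCat.{0} Λ))
          = (biprod.fst : f.obj.obj' 0 ⊞ g.obj.obj' 0 ⟶ f.obj.obj' 0) ≫ 0
        simp)))
      ?_ ?_ ?_
    · apply InducedCategory.hom_ext
      apply ComposableArrows.hom_ext₁
      · have hx : (biprod.inr : g.obj.obj' 0 ⟶ f.obj.obj' 0 ⊞ g.obj.obj' 0) ≫ biprod.snd
            = 𝟙 (g.obj.obj' 0) := by simp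
        exact hx
      · have hx : 𝟙 (g.obj.obj' 0) ≫ 𝟙 (g.obj.obj' 0) = 𝟙 (g.obj.obj' 0) := by simp
        exact hx
    · apply InducedCategory.hom_ext
      apply ComposableArrows.hom_ext₁
      · have hx : (biprod.inl : f.obj.obj' 0 ⟶ f.obj.obj' 0 ⊞ g.obj.obj' 0) ≫ biprod.fst
            = 𝟙 (f.obj.obj' 0) := by simp
        exact hx
      · exact (isZero_zero _).eq_of_src _ _
    · apply InducedCategory.hom_ext
      apply ComposableArrows.hom_ext₁
      · have hx : ∀ (X Y : ModuleCat.{0} Λ),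
            (biprod.snd : X ⊞ Y ⟶ Y) ≫ biprod.inr + (biprod.fst : X ⊞ Y ⟶ X) ≫ biprod.inl
              = 𝟙 (X ⊞ Y) := fun X Y => by rw [add_comm]; exact biprod.total
        exact hx _ _
      · have hx : ∀ (X Y : ModuleCat.{0} Λ), IsZero Y → ∀ (a : X ⟶ Y) (b : Y ⟶ X),
            𝟙 X ≫ 𝟙 X + a ≫ b = 𝟙 X := by
          intro X Y hY a b
          rw [hY.eq_of_tgt a 0, zero_comp, add_zero, Category.id_comp]
        exact hx _ _ (isZero_zero _) _ _
  · -- IsZero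
    have hx : ∀ (X Y : ModuleCat.{0} Λ),
        IsZero (cokernel ((W Λ P).map (biprod.snd : X ⊞ Y ⟶ Y))) := by
      intro X Y
      haveI : Epi ((W Λ P).map (biprod.snd : X ⊞ Y ⟶ Y)) :=
        epi_W_of_lift (P := P) _ (fun N u => ⟨u ≫ biprod.inr, by simp⟩)
      exact isZero_coker_of_epi _
    exact hx _ _

end Theta3

end Paper


namespace Paper

section Theta4

open ZeroObject

variable {Λ : Type} [Ring Λ] {P : ModuleCat.{0} Λ → Prop}

lemma addclosure_isZero {K : FCat Λ P}
    (hK : AddClosure (fun k : FCat Λ P =>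
      IsIso (arrowHom Λ k.obj) ∨ IsZero (k.obj.obj' 1)) K) :
    IsZero ((ThetaAmb Λ P).obj K) := by
  induction hK with
  | @of X h =>
    rcases h with h | h
    · haveI : IsIso (far X) := h
      haveI : Epi ((W Λ P).map (far X)) := inferInstance
      exact isZero_coker_of_epi ((W Λ P).map (far X))
    · have hW : IsZero ((W Λ P).obj (X.obj.obj' 1)) := by
        apply Functor.isZero
        intro N
        haveI : Subsingleton (((W Λ P).obj (X.obj.obj' 1)).obj N) :=
          ⟨fun a b => h.eq_of_tgt a b⟩
        exact AddCommGrpCat.isZero_of_subsingleton _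
      haveI : Epi ((W Λ P).map (far X)) := ⟨fun u v _ => hW.eq_of_src u v⟩
      exact isZero_coker_of_epi ((W Λ P).map (far X))
  | @zero X h =>
    have h0 : 𝟙 X = 0 := by rw [← IsZero.iff_id_eq_zero]; exact h
    rw [IsZero.iff_id_eq_zero, ← (ThetaAmb Λ P).map_id, h0, Functor.map_zero]
  | @biprod X Y Z hX hY i₁ i₂ p₁ p₂ h₁ h₂ h ihX ihY =>
    rw [IsZero.iff_id_eq_zero, ← (ThetaAmb Λ P).map_id, ← h, Functor.map_add,
      Functor.map_comp, Functor.map_comp, ihX.eq_of_tgt ((ThetaAmb Λ P).map p₁) 0,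
      ihY.eq_of_tgt ((ThetaAmb Λ P).map p₂) 0, zero_comp, zero_comp, add_zero]

lemma theta_map_eq_of_rel {f g : FCat Λ P} {u v : f ⟶ g}
    (hr : idealRel (fun k : FCat Λ P =>
      IsIso (arrowHom Λ k.obj) ∨ IsZero (k.obj.obj' 1)) u v) :
    (ThetaAmb Λ P).map u = (ThetaAmb Λ P).map v := by
  obtain ⟨K, a, b, hK, hab⟩ := hr
  have h0 : (ThetaAmb Λ P).map (u - v) = 0 := by
    rw [← hab, Functor.map_comp,
      (addclosure_isZero hK).eq_of_tgt ((ThetaAmb Λ P).map a) 0, zero_comp]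
  rw [Functor.map_sub] at h0
  exact sub_eq_zero.mp h0

lemma exists_h_of_theta_eq {f g : FCat Λ P} (u v : f ⟶ g)
    (h : (ThetaAmb Λ P).map u = (ThetaAmb Λ P).map v) :
    ∃ hm : f.obj.obj' 1 ⟶ g.obj.obj' 0, app1 (u - v) = hm ≫ far g := by
  let M2 : MCat Λ P := ⟨f.obj.obj' 1, f.property.2.1⟩
  have e : ∀ w : f ⟶ g,
      ((W Λ P).map (app1 w) ≫ cokernel.π ((W Λ P).map (far g))).app (op M2)
          (𝟙 (f.obj.obj' 1))
        = (cokernel.π ((W Λ P).map (far g))).app (op M2) (app1 w) := by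
    intro w
    show (cokernel.π ((W Λ P).map (far g))).app (op M2) (𝟙 _ ≫ app1 w) = _
    rw [Category.id_comp]
  have hud : (cokernel.π ((W Λ P).map (far g))).app (op M2) (app1 u)
      = (cokernel.π ((W Λ P).map (far g))).app (op M2) (app1 v) := by
    rw [← e u, ← e v, ← theta_pi, ← theta_pi, h]
  have h1 : (cokernel.π ((W Λ P).map (far g))).app (op M2)
      ((app1 u : ((W Λ P).obj (g.obj.obj' 1)).obj (op M2)) - app1 v) = 0 := by
    erw [map_sub]
    rw [hud, sub_self]
  obtain ⟨hm, hhm⟩ := coker_exact ((W Λ P).map (far g)) (op M2) (app1 u - app1 v) h1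
  have hhm' : (hm : f.obj.obj' 1 ⟶ g.obj.obj' 0) ≫ far g = app1 u - app1 v := hhm
  exact ⟨hm, hhm'.symm⟩

lemma rel_of_theta_eq {nn : ℕ} (hP : IsNClusterTilting Λ nn P) {f g : FCat Λ P}
    {u v : f ⟶ g} (h : (ThetaAmb Λ P).map u = (ThetaAmb Λ P).map v) :
    idealRel (fun k : FCat Λ P =>
      IsIso (arrowHom Λ k.obj) ∨ IsZero (k.obj.obj' 1)) u v := by
  obtain ⟨hm, hhm⟩ := exists_h_of_theta_eq u v h
  obtain ⟨K, α, β, hfac, hcl, _⟩ := factor_thru hP (u - v) hm hhm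
  exact ⟨K, α, β, hcl, hfac⟩

lemma theta_dense {nn : ℕ} (hP : IsNClusterTilting Λ nn P) : Dense (Theta Λ P) := by
  intro Y
  obtain ⟨A, B, fm0, ⟨e0⟩⟩ := Y.property.1
  let fm : A.obj ⟶ B.obj := fm0.hom
  let e := e0 ≪≫ (cokIso fm0).symm
  haveI hBfin : Module.Finite Λ B.obj := hP.subcat_fg _ B.property
  obtain ⟨m, l, hl⟩ := Module.Finite.exists_fin' (R := Λ) (M := B.obj)
  let Q : ModuleCat.{0} Λ := ModuleCat.of Λ (Fin m → Λ)
  let p : Q ⟶ B.obj := ModuleCat.ofHom l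
  haveI hQproj : Projective Q := ModuleCat.projective_of_free (Pi.basisFun Λ (Fin m))
  have hQP : P Q := P_projective hP Q (inferInstanceAs (Module.Finite Λ (Fin m → Λ))) hQproj
  have hpepi : Epi p := (ModuleCat.epi_iff_surjective _).mpr hl
  have hz : IsZero ((cokernel ((W Λ P).map fm)).obj (op ⟨Q, hQP⟩)) :=
    (Y.property.2 ⟨Q, hQP⟩ hQproj).of_iso
      (((evaluation (MCat Λ P)ᵒᵖ AddCommGrpCat.{0}).obj (op ⟨Q, hQP⟩)).mapIso e).symm
  have h0 : (cokernel.π ((W Λ P).map fm)).app (op ⟨Q, hQP⟩) p = 0 :=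
    eq_zero_of_isZero_ab hz _
  obtain ⟨t, ht⟩ := coker_exact ((W Λ P).map fm) (op ⟨Q, hQP⟩) p h0
  let fm' : A.obj ⟶ B.obj := fm
  let t0 : Q ⟶ A.obj := t
  have ht' : t0 ≫ fm' = p := ht
  have hepi : Epi (arrowHom Λ (ComposableArrows.mk₁
      (biprod.desc fm' p))) := by
    show Epi (biprod.desc fm' p)
    haveI : Epi (biprod.inr ≫ biprod.desc fm' p) := by
      rw [biprod.inr_desc]; exact hpepi
    exact epi_of_epi biprod.inr _
  let D : FCat Λ P := ⟨ComposableArrows.mk₁ (biprod.desc fm' p),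
    hP.closed_biprod A.property hQP, B.property, hepi⟩
  have hfac2 : biprod.desc fm' p
      = biprod.desc (𝟙 A.obj) t0 ≫ fm' := by
    apply biprod.hom_ext'
    · rw [biprod.inl_desc, biprod.inl_desc_assoc, Category.id_comp]
    · rw [biprod.inr_desc, biprod.inr_desc_assoc, ht']
  have w1 : (W Λ P).map (biprod.desc fm' p)
      ≫ cokernel.π ((W Λ P).map fm) = 0 := by
    rw [hfac2, Functor.map_comp, Category.assoc]
    have hc : (W Λ P).map fm' ≫ cokernel.π ((W Λ P).map fm)
        = 0 := cokernel.condition ((W Λ P).map fm)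
    rw [hc, comp_zero]
  have w2 : (W Λ P).map fm
      ≫ cokernel.π ((W Λ P).map (biprod.desc fm' p)) = 0 := by
    have hfm : (W Λ P).map fm
        = (W Λ P).map (biprod.inl : A.obj ⟶ A.obj ⊞ Q)
          ≫ (W Λ P).map (biprod.desc fm' p) := by
      rw [← Functor.map_comp, biprod.inl_desc]
    rw [hfm, Category.assoc, cokernel.condition, comp_zero]
  let c : ((ThetaAmb Λ P).obj D) ≅ cokernel ((W Λ P).map fm) :=
    { hom := cokernel.desc _ (cokernel.π ((W Λ P).map fm)) w1
      inv := cokernel.desc _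
        (cokernel.π ((W Λ P).map (biprod.desc fm' p))) w2
      hom_inv_id := by
        apply coequalizer.hom_ext
        simp
        erw [cokernel.π_desc_assoc, cokernel.π_desc, Category.comp_id]
        rfl
      inv_hom_id := by
        apply coequalizer.hom_ext; simp
        erw [cokernel.π_desc_assoc, cokernel.π_desc] }
  exact ⟨D, ⟨(ObjectProperty.ι _).preimageIso (c ≪≫ e.symm)⟩⟩

end Theta4

end Paper

namespace Paper

/-- The functor `Θ : F(M) → mod-M̲`, `f ↦ Coker M(-, f)`, is
full, dense and objective, and induces an equivalence `F(M)/V′ ≃ mod-M̲`. -/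
theorem statement13 (R : Type) [CommRing R] [IsArtinianRing R]
    (Λ : Type) [Ring Λ] [Algebra R Λ] [Module.Finite R Λ]
    (n : ℕ) (hn : 0 < n) (P : ModuleCat.{0} Λ → Prop)
    (hP : IsNClusterTilting Λ n P) :
    ∃ Θ : FCat Λ P ⥤ Bar Λ P,
      Nonempty (Θ ⋙ ObjectProperty.ι _ ≅ ThetaAmb Λ P) ∧
      Θ.Full ∧ Dense Θ ∧ Objective Θ ∧
      InducesEquivalence
        (fun f : FCat Λ P => IsIso (arrowHom Λ f.obj) ∨ IsZero (f.obj.obj' 1)) Θ := by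
  refine ⟨Theta Λ P, ⟨ObjectProperty.liftCompιIso _ _ _⟩, ?_, theta_dense hP, ?_, ?_⟩
  · -- Full
    refine ⟨fun {f g} χ => ?_⟩
    obtain ⟨φ, hφ⟩ := exists_lift (f := f) (g := g) χ.hom
    exact ⟨φ, InducedCategory.hom_ext hφ⟩
  · -- Objective
    intro f g φ h0
    have h0' : (ThetaAmb Λ P).map φ = (ThetaAmb Λ P).map (0 : f ⟶ g) := by
      have hz : (ThetaAmb Λ P).map (0 : f ⟶ g) = 0 := Functor.map_zero _ _ _
      rw [hz]
      exact congrArg (fun x => x.hom) h0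
    obtain ⟨hm, hhm⟩ := exists_h_of_theta_eq φ 0 h0'
    rw [sub_zero] at hhm
    obtain ⟨K, α, β, hfac, _, hz⟩ := factor_thru hP φ hm hhm
    exact ⟨K, α, β, hfac, isZero_bar hz⟩
  · -- InducesEquivalence
    refine ⟨CategoryTheory.Quotient.lift _ (Theta Λ P)
      (fun x y u v hr => InducedCategory.hom_ext (theta_map_eq_of_rel hr)), CategoryTheory.Quotient.lift_spec _ _ _, ?_⟩
    refine { faithful := ⟨?_⟩, full := ⟨?_⟩, essSurj := ⟨?_⟩ }
    · intro X Y u v huv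
      obtain ⟨u', hu⟩ := Quot.exists_rep u
      obtain ⟨v', hv⟩ := Quot.exists_rep v
      subst hu; subst hv
      have hΘ : (ThetaAmb Λ P).map u' = (ThetaAmb Λ P).map v' := congrArg (fun x => x.hom) huv
      exact CategoryTheory.Quotient.sound _ (rel_of_theta_eq hP hΘ)
    · intro X Y χ
      obtain ⟨φ, hφ⟩ := exists_lift (f := X.as) (g := Y.as) χ.hom
      exact ⟨(Quotient.functor _).map φ, InducedCategory.hom_ext hφ⟩
    · intro Y
      obtain ⟨X, ⟨iso⟩⟩ := theta_dense hP Y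
      exact ⟨(Quotient.functor _).obj X, ⟨iso⟩⟩

end Paper
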